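/- Let Σ=(X,U,F) be a topological system (X is a topological space) and Q ⊆ X a nonempty closed set. Suppose that F(·,u) : X ⇉ X is lower semicontinuous for every u∈U. Let (𝒜,G) be an invariant cover of Σ and Q, and let 𝒞 := {cl A : A∈𝒜} be the set of closures of the cover elements. Then there exists a map H : 𝒞 → U with H(cl A) = G(A) for suitable representatives such that (𝒞,H) is an invariant cover of Σ and Q and h(𝒞,H) ≤ h(𝒜,G). -/

import Mathlib

open Set Filter Topology

/-- An invariant cover `(𝒜, G)` of the system with transition function `F` and the set `Q`:
`cov` is a finite cover of `Q` by subsets of `Q` and `G` assigns to each cover element an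
input such that `F(A, G(A)) ⊆ Q`. -/
structure InvCover {X U : Type*} (F : X → U → Set X) (Q : Set X) where
  cov : Set (Set X)
  G : Set X → U
  finite : cov.Finite
  subset : ∀ A ∈ cov, A ⊆ Q
  covers : Q ⊆ ⋃₀ cov
  inv : ∀ A ∈ cov, ∀ x ∈ A, F x (G A) ⊆ Q

variable {X U : Type*}

/-- The set `P(α|_{[0;t]})` associated with `𝒮 ⊆ 𝒜^{[0;τ)}`: for `t+1 < τ` it is the set of
possible successor cover elements of the initial piece `α|_{[0;t]}`, and for `t = τ-1`
(i.e. `¬ t + 1 < τ`) it is the set `P(α)` of initial cover elements. -/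
def Pset {τ : ℕ} (𝒮 : Set (Fin τ → Set X)) (α : Fin τ → Set X) (t : ℕ) :
    Set (Set X) :=
  if ht : t + 1 < τ then
    {A | ∃ β ∈ 𝒮, (∀ t' : Fin τ, (t' : ℕ) ≤ t → β t' = α t') ∧ A = β ⟨t + 1, ht⟩}
  else
    {A | ∃ β ∈ 𝒮, ∃ h0 : 0 < τ, A = β ⟨0, h0⟩}

/-- `𝒮` is `(τ,Q)`-spanning in the invariant cover `c`. -/
def IsSpanning (F : X → U → Set X) (Q : Set X) (c : InvCover F Q) (τ : ℕ)
    (𝒮 : Set (Fin τ → Set X)) : Prop :=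
  (∀ α ∈ 𝒮, ∀ t, α t ∈ c.cov) ∧
  (∀ x ∈ Q, ∃ α ∈ 𝒮, ∃ h0 : 0 < τ, x ∈ α ⟨0, h0⟩) ∧
  (∀ α ∈ 𝒮, ∀ t : Fin τ, (t : ℕ) + 1 < τ →
    ∀ x ∈ α t, F x (c.G (α t)) ⊆ ⋃ A ∈ Pset 𝒮 α (t : ℕ), A)

/-- The expansion number `N(𝒮)`. -/
noncomputable def expNum {τ : ℕ} (𝒮 : Set (Fin τ → Set X)) : ℕ :=
  sSup {n | ∃ α ∈ 𝒮, n = ∏ t ∈ Finset.range τ, (Pset 𝒮 α t).ncard}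

/-- `r_inv(τ, Q)` : the smallest expansion number of a `(τ,Q)`-spanning set (`⊤` if no
spanning set exists). -/
noncomputable def rinv (F : X → U → Set X) (Q : Set X) (c : InvCover F Q)
    (τ : ℕ) : ℕ∞ :=
  sInf {n | ∃ 𝒮 : Set (Fin τ → Set X), IsSpanning F Q c τ 𝒮 ∧ n = (expNum 𝒮 : ℕ∞)}

/-- Base-2 logarithm `ℕ∞ → EReal`, with `log₂ ∞ = ∞`. -/
noncomputable def elog2 (m : ℕ∞) : EReal :=
  WithTop.recTopCoe ⊤ (fun n : ℕ => ((Real.logb 2 n : ℝ) : EReal)) m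

/-- The entropy `h(𝒜,G)` of an invariant cover, defined through the infimum
`inf_{τ ≥ 1} (1/τ) log₂ r_inv(τ,Q)` (which equals the limit). -/
noncomputable def coverEntropy (F : X → U → Set X) (Q : Set X)
    (c : InvCover F Q) : EReal :=
  ⨅ (τ : ℕ) (_ : 0 < τ), (((τ : ℝ)⁻¹ : ℝ) : EReal) * elog2 (rinv F Q c τ)

/-- The invariance feedback entropy `h_inv` of the system and `Q`. -/
noncomputable def invEntropy (F : X → U → Set X) (Q : Set X) : EReal :=
  ⨅ c : InvCover F Q, coverEntropy F Q c

section Aux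

variable [TopologicalSpace X]

lemma lsc_closure (F : X → U → Set X)
    (hlsc : ∀ (u : U) (V : Set X), IsOpen V → IsOpen {x : X | (F x u ∩ V).Nonempty})
    {A S : Set X} {u : U} (h : ∀ y ∈ A, F y u ⊆ S) :
    ∀ x ∈ closure A, F x u ⊆ closure S := by
  intro x hx z hz
  by_contra hzS
  have hO := hlsc u _ (isClosed_closure (s := S)).isOpen_compl
  have hxO : x ∈ {x | (F x u ∩ (closure S)ᶜ).Nonempty} := ⟨z, hz, hzS⟩
  obtain ⟨y, hyO, hyA⟩ := mem_closure_iff.mp hx _ hO hxO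
  obtain ⟨w, hw1, hw2⟩ := hyO
  exact hw2 (subset_closure (h y hyA hw1))

/-- Closure cover built from a representative map `ρ`. -/
def mkClosureCover (F : X → U → Set X) (Q : Set X) (hQclosed : IsClosed Q)
    (hlsc : ∀ (u : U) (V : Set X), IsOpen V → IsOpen {x : X | (F x u ∩ V).Nonempty})
    (c : InvCover F Q) (ρ : Set X → Set X)
    (hρ : ∀ C ∈ closure '' c.cov, ρ C ∈ c.cov ∧ closure (ρ C) = C) : InvCover F Q where
  cov := closure '' c.cov
  G := fun C => c.G (ρ C)
  finite := c.finite.image _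
  subset := by
    rintro C ⟨A, hA, rfl⟩
    exact closure_minimal (c.subset A hA) hQclosed
  covers := by
    intro x hx
    obtain ⟨A, hA, hxA⟩ := c.covers hx
    exact ⟨closure A, ⟨A, hA, rfl⟩, subset_closure hxA⟩
  inv := by
    intro C hC x hx
    obtain ⟨hmem, hcl⟩ := hρ C hC
    have h1 : ∀ y ∈ ρ C, F y (c.G (ρ C)) ⊆ Q := c.inv (ρ C) hmem
    rw [← hcl] at hx
    have := lsc_closure F hlsc h1 x hx
    rwa [hQclosed.closure_eq] at this

/-- The set of admissible representative maps. -/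
def repSet {F : X → U → Set X} {Q : Set X} (c : InvCover F Q) : Set (Set X → Set X) :=
  {ρ | (∀ C ∈ closure '' c.cov, ρ C ∈ c.cov ∧ closure (ρ C) = C) ∧
    ∀ C ∉ closure '' c.cov, ρ C = ∅}

end Aux

lemma ENat.sInf_mem' {s : Set ℕ∞} (hs : s.Nonempty) : sInf s ∈ s := by
  by_cases h : ∃ m ∈ s, m ≠ ⊤
  · obtain ⟨m, hm, hmt⟩ := h
    set t : Set ℕ := {k : ℕ | (k : ℕ∞) ∈ s} with ht
    have htne : t.Nonempty := by
      lift m to ℕ using hmt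
      exact ⟨m, hm⟩
    have h1 : sInf s = ((sInf t : ℕ) : ℕ∞) := by
      apply le_antisymm
      · exact sInf_le (Nat.sInf_mem htne)
      · apply le_sInf
        intro x hx
        cases x with
        | top => exact le_top
        | coe k => exact Nat.cast_le.mpr (Nat.sInf_le hx)
    rw [h1]
    exact Nat.sInf_mem htne
  · push_neg at h
    obtain ⟨m, hm⟩ := hs
    have : m = ⊤ := h m hm
    subst this
    have : s = {⊤} := by
      apply Set.eq_singleton_iff_unique_mem.mpr
      exact ⟨hm, fun x hx => h x hx⟩
    rw [this]; simp

set_option maxHeartbeats 1000000 in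
lemma key {X U : Type*} [TopologicalSpace X] [Nonempty U]
    (F : X → U → Set X) (Q : Set X) (hQ : Q.Nonempty) (hQclosed : IsClosed Q)
    (hlsc : ∀ (u : U) (V : Set X), IsOpen V → IsOpen {x : X | (F x u ∩ V).Nonempty})
    (c : InvCover F Q) (τ : ℕ) (hτ : 0 < τ)
    (𝒮 : Set (Fin τ → Set X)) (hS : IsSpanning F Q c τ 𝒮) :
    ∃ ρ, ∃ hρ : ρ ∈ repSet c,
      coverEntropy F Q (mkClosureCover F Q hQclosed hlsc c ρ hρ.1) ≤
        (((τ : ℝ)⁻¹ * Real.logb 2 (expNum 𝒮) : ℝ) : EReal) := by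
  classical
  obtain ⟨x₀, hx₀⟩ := hQ
  obtain ⟨α₀, hα₀, h0τ, hx₀0⟩ := hS.2.1 x₀ hx₀
  -- Inits
  set Inits : Set (Set X) := {A | ∃ β ∈ 𝒮, ∃ h0 : 0 < τ, A = β ⟨0, h0⟩} with hInits
  have hPset_eq_Inits : ∀ (α : Fin τ → Set X) (t : ℕ), ¬ (t + 1 < τ) →
      Pset 𝒮 α t = Inits := by
    intro α t ht
    rw [Pset, dif_neg ht]
  have hInits_sub : Inits ⊆ c.cov := by
    rintro A ⟨β, hβ, h0, rfl⟩
    exact hS.1 β hβ _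
  have hInits_ne : Inits.Nonempty := ⟨α₀ ⟨0, hτ⟩, α₀, hα₀, hτ, rfl⟩
  have hInits_fin : Inits.Finite := c.finite.subset hInits_sub
  have hQsubInits : Q ⊆ ⋃ B ∈ Inits, B := by
    intro x hx
    obtain ⟨β, hβ, h0, hxβ⟩ := hS.2.1 x hx
    exact Set.mem_biUnion ⟨β, hβ, h0, rfl⟩ hxβ
  -- Pset basic facts
  have hPset_sub : ∀ (α : Fin τ → Set X) (t : ℕ), Pset 𝒮 α t ⊆ c.cov := by
    intro α t A hA
    rw [Pset] at hA
    split at hA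
    · obtain ⟨β, hβ, -, rfl⟩ := hA
      exact hS.1 β hβ _
    · obtain ⟨β, hβ, -, rfl⟩ := hA
      exact hS.1 β hβ _
  have hPset_fin : ∀ (α : Fin τ → Set X) (t : ℕ), (Pset 𝒮 α t).Finite :=
    fun α t => c.finite.subset (hPset_sub α t)
  have hPset_ne : ∀ α ∈ 𝒮, ∀ t : ℕ, (Pset 𝒮 α t).Nonempty := by
    intro α hα t
    rw [Pset]
    split
    · exact ⟨α ⟨t + 1, by omega⟩, α, hα, fun _ _ => rfl, rfl⟩
    · exact ⟨α ⟨0, hτ⟩, α, hα, hτ, rfl⟩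
  have hPcard_pos : ∀ α ∈ 𝒮, ∀ t : ℕ, 1 ≤ (Pset 𝒮 α t).ncard := by
    intro α hα t
    exact (Set.ncard_pos (hPset_fin α t)).mpr (hPset_ne α hα t)
  set n := expNum 𝒮 with hn
  set M := c.cov.ncard with hM
  have hPcard_le : ∀ (α : Fin τ → Set X) (t : ℕ), (Pset 𝒮 α t).ncard ≤ M :=
    fun α t => Set.ncard_le_ncard (hPset_sub α t) c.finite
  have hBdd : BddAbove {m | ∃ α ∈ 𝒮, m = ∏ t ∈ Finset.range τ, (Pset 𝒮 α t).ncard} := by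
    refine ⟨M ^ τ, ?_⟩
    rintro m ⟨α, hα, rfl⟩
    calc ∏ t ∈ Finset.range τ, (Pset 𝒮 α t).ncard
        ≤ ∏ _t ∈ Finset.range τ, M := Finset.prod_le_prod (fun _ _ => Nat.zero_le _)
          (fun t _ => hPcard_le α t)
      _ = M ^ τ := by simp
  have hprod_le_n : ∀ α ∈ 𝒮, ∏ t ∈ Finset.range τ, (Pset 𝒮 α t).ncard ≤ n :=
    fun α hα => le_csSup hBdd ⟨α, hα, rfl⟩
  have hone_le_prod : ∀ α ∈ 𝒮, 1 ≤ ∏ t ∈ Finset.range τ, (Pset 𝒮 α t).ncard := by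
    intro α hα
    exact Finset.one_le_prod' (fun t _ => hPcard_pos α hα t)
  have hn1 : 1 ≤ n := le_trans (hone_le_prod α₀ hα₀) (hprod_le_n α₀ hα₀)
  set N₀ := Inits.ncard with hN₀
  have hN₀1 : 1 ≤ N₀ := (Set.ncard_pos hInits_fin).mpr hInits_ne
  have hN₀n : N₀ ≤ n := by
    refine le_trans ?_ (hprod_le_n α₀ hα₀)
    have hmem : τ - 1 ∈ Finset.range τ := Finset.mem_range.mpr (by omega)
    have : (Pset 𝒮 α₀ (τ - 1)).ncard = N₀ := by
      rw [hPset_eq_Inits α₀ (τ - 1) (by omega)]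
    calc N₀ = (Pset 𝒮 α₀ (τ - 1)).ncard := this.symm
      _ ≤ ∏ t ∈ Finset.range τ, (Pset 𝒮 α₀ t).ncard :=
          Finset.single_le_prod' (fun t _ => hPcard_pos α₀ hα₀ t) hmem
  -- Pset congruence
  have hPset_congr : ∀ (α β : Fin τ → Set X) (s t : ℕ),
      (∀ t' : Fin τ, (t' : ℕ) ≤ s → β t' = α t') → t ≤ s → Pset 𝒮 β t = Pset 𝒮 α t := by
    intro α β s t hagr hts
    by_cases ht : t + 1 < τ
    · rw [Pset, dif_pos ht, Pset, dif_pos ht]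
      ext A
      constructor
      · rintro ⟨β', hβ', hag, rfl⟩
        exact ⟨β', hβ', fun t' ht' => (hag t' ht').trans (hagr t' (le_trans ht' hts)), rfl⟩
      · rintro ⟨β', hβ', hag, rfl⟩
        exact ⟨β', hβ', fun t' ht' => (hag t' ht').trans (hagr t' (le_trans ht' hts)).symm, rfl⟩
    · rw [hPset_eq_Inits β t ht, hPset_eq_Inits α t ht]
  -- future products
  set Wset : (Fin τ → Set X) → ℕ → Set ℕ := fun α s =>
    {m | ∃ β ∈ 𝒮, (∀ t' : Fin τ, (t' : ℕ) ≤ s → β t' = α t') ∧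
        m = ∏ t ∈ Finset.Ico s τ, (Pset 𝒮 β t).ncard} with hWsetdef
  set W : (Fin τ → Set X) → ℕ → ℕ := fun α s => sSup (Wset α s) with hWdef
  have hWset_elem_le : ∀ (α : Fin τ → Set X) (s : ℕ), ∀ m ∈ Wset α s, m ≤ n := by
    rintro α s m ⟨β, hβ, -, rfl⟩
    refine le_trans ?_ (hprod_le_n β hβ)
    refine Finset.prod_le_prod_of_subset_of_one_le' ?_ ?_
    · intro t ht
      simp only [Finset.mem_Ico] at ht
      exact Finset.mem_range.mpr ht.2
    · intro t _ _
      exact hPcard_pos β hβ t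
  have hWbdd : ∀ (α : Fin τ → Set X) (s : ℕ), BddAbove (Wset α s) :=
    fun α s => ⟨n, fun m hm => hWset_elem_le α s m hm⟩
  have hWset_ne : ∀ α ∈ 𝒮, ∀ s : ℕ, (Wset α s).Nonempty :=
    fun α hα s => ⟨_, α, hα, fun _ _ => rfl, rfl⟩
  have hW_mem : ∀ α ∈ 𝒮, ∀ s : ℕ, W α s ∈ Wset α s :=
    fun α hα s => Nat.sSup_mem (hWset_ne α hα s) (hWbdd α s)
  have hW_le : ∀ α ∈ 𝒮, ∀ s : ℕ, W α s ≤ n :=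
    fun α hα s => hWset_elem_le α s _ (hW_mem α hα s)
  have hW_ge1 : ∀ α ∈ 𝒮, ∀ s : ℕ, 1 ≤ W α s := by
    intro α hα s
    obtain ⟨β, hβ, -, hWeq⟩ := hW_mem α hα s
    rw [hWeq]
    exact Finset.one_le_prod' (fun t _ => hPcard_pos β hβ t)
  have hW_last : ∀ α ∈ 𝒮, W α (τ - 1) = N₀ := by
    intro α hα
    have hsing : Finset.Ico (τ - 1) τ = {τ - 1} := by
      ext x
      simp only [Finset.mem_Ico, Finset.mem_singleton]
      omega
    have hval : ∀ m ∈ Wset α (τ - 1), m = N₀ := by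
      rintro m ⟨β, hβ, -, rfl⟩
      rw [hsing, Finset.prod_singleton, hPset_eq_Inits β (τ - 1) (by omega)]
    have h1 : W α (τ - 1) = N₀ := hval _ (hW_mem α hα (τ - 1))
    exact h1
  -- key product inequality
  have hK4 : ∀ α ∈ 𝒮, ∀ s : ℕ, s + 1 < τ → ∀ β ∈ 𝒮,
      (∀ t' : Fin τ, (t' : ℕ) ≤ s → β t' = α t') →
      (Pset 𝒮 α s).ncard * W β (s + 1) ≤ W α s := by
    intro α hα s hs β hβ hagr
    obtain ⟨β', hβ', hagr', hWeq⟩ := hW_mem β hβ (s + 1)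
    have hagr2 : ∀ t' : Fin τ, (t' : ℕ) ≤ s → β' t' = α t' := fun t' ht' =>
      (hagr' t' (le_trans ht' (Nat.le_succ s))).trans (hagr t' ht')
    have h1 : Pset 𝒮 β' s = Pset 𝒮 α s := hPset_congr α β' s s hagr2 le_rfl
    have h2 : (Pset 𝒮 α s).ncard * W β (s + 1) =
        ∏ t ∈ Finset.Ico s τ, (Pset 𝒮 β' t).ncard := by
      rw [hWeq, ← h1, Finset.prod_eq_prod_Ico_succ_bot (by omega : s < τ)]
    rw [h2]
    exact le_csSup (hWbdd α s) ⟨β', hβ', hagr2, rfl⟩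
  -- potential
  set L := Real.logb 2 n with hLdef
  have hL0 : 0 ≤ L := Real.logb_nonneg one_lt_two (by exact_mod_cast hn1)
  set v : (Fin τ → Set X) → ℕ → ℝ := fun α s =>
    Real.logb 2 (W α s) - ((τ - s : ℕ) : ℝ) / τ * L with hvdef
  have hv_le_L : ∀ α ∈ 𝒮, ∀ s : ℕ, v α s ≤ L := by
    intro α hα s
    have h1 : Real.logb 2 (W α s) ≤ L := by
      rw [hLdef]
      exact Real.logb_le_logb_of_le one_lt_two
        (by exact_mod_cast hW_ge1 α hα s) (by exact_mod_cast hW_le α hα s)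
    have h2 : 0 ≤ ((τ - s : ℕ) : ℝ) / τ * L := by positivity
    simp only [hvdef]
    linarith
  have hv_ge : ∀ α ∈ 𝒮, ∀ s : ℕ, -L ≤ v α s := by
    intro α hα s
    have h1 : 0 ≤ Real.logb 2 (W α s) :=
      Real.logb_nonneg one_lt_two (by exact_mod_cast hW_ge1 α hα s)
    have h2 : ((τ - s : ℕ) : ℝ) / τ * L ≤ L := by
      have hle : ((τ - s : ℕ) : ℝ) / τ ≤ 1 := by
        rw [div_le_one (by exact_mod_cast hτ)]
        exact_mod_cast Nat.sub_le τ s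
      nlinarith
    simp only [hvdef]
    linarith
  -- choice of minimizing occurrence
  have hvmin : ∀ A : Set X, ∃ p : (Fin τ → Set X) × Fin τ,
      (∃ γ ∈ 𝒮, ∃ s : Fin τ, γ s = A) →
      p.1 ∈ 𝒮 ∧ p.1 p.2 = A ∧
        ∀ β ∈ 𝒮, ∀ s' : Fin τ, β s' = A → v p.1 (p.2 : ℕ) ≤ v β (s' : ℕ) := by
    intro A
    by_cases h : ∃ γ ∈ 𝒮, ∃ s : Fin τ, γ s = A
    swap
    · exact ⟨⟨α₀, ⟨0, hτ⟩⟩, fun hc => absurd hc h⟩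
    obtain ⟨γ, hγ, s, hγs⟩ := h
    set VOcc : Set ((Fin τ → Set X) × Fin τ) := {q | q.1 ∈ 𝒮 ∧ q.1 q.2 = A} with hVOcc
    set vIm := (fun q : (Fin τ → Set X) × Fin τ => v q.1 (q.2 : ℕ)) '' VOcc with hvIm
    have hfin : vIm.Finite := by
      apply Set.Finite.subset (Set.Finite.image
        (fun pr : ℕ × ℕ => Real.logb 2 pr.1 - ((τ - pr.2 : ℕ) : ℝ) / τ * L)
        ((Set.finite_Icc 1 n).prod (Set.finite_Iio τ)))
      rintro x ⟨q, hq, rfl⟩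
      exact ⟨(W q.1 (q.2 : ℕ), (q.2 : ℕ)),
        ⟨⟨hW_ge1 q.1 hq.1 _, hW_le q.1 hq.1 _⟩, q.2.2⟩, rfl⟩
    have hne2 : vIm.Nonempty := ⟨_, ⟨(γ, s), ⟨hγ, hγs⟩, rfl⟩⟩
    obtain ⟨m, ⟨q, hqmem, rfl⟩, hmin⟩ := Set.exists_min_image vIm id hfin hne2
    exact ⟨q, fun _ => ⟨hqmem.1, hqmem.2,
      fun β hβ s' hs' => hmin _ ⟨(β, s'), ⟨hβ, hs'⟩, rfl⟩⟩⟩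
  choose pk hpk using hvmin
  set Occ : Set X → Prop := fun A => ∃ γ ∈ 𝒮, ∃ s : Fin τ, γ s = A with hOccdef
  set φ : Set X → ℝ := fun A =>
    if Occ A then v (pk A).1 ((pk A).2 : ℕ) else Real.logb 2 N₀ - L / τ with hφdef
  set nextSet : Set X → Set (Set X) := fun A =>
    if Occ A then Pset 𝒮 (pk A).1 ((pk A).2 : ℕ) else Inits with hnextdef
  have hnext_sub : ∀ A, nextSet A ⊆ c.cov := by
    intro A
    simp only [hnextdef]
    split
    · exact hPset_sub _ _
    · exact hInits_sub
  have hnext_fin : ∀ A, (nextSet A).Finite := fun A => c.finite.subset (hnext_sub A)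
  have hnext_ne : ∀ A, (nextSet A).Nonempty := by
    intro A
    simp only [hnextdef]
    split
    · next h => exact hPset_ne _ (hpk A h).1 _
    · exact hInits_ne
  have hnext_card1 : ∀ A, 1 ≤ (nextSet A).ncard :=
    fun A => (Set.ncard_pos (hnext_fin A)).mpr (hnext_ne A)
  have hφ_le_v : ∀ A, ∀ β ∈ 𝒮, ∀ s' : Fin τ, β s' = A → φ A ≤ v β (s' : ℕ) := by
    intro A β hβ s' hs'
    have hOA : Occ A := ⟨β, hβ, s', hs'⟩
    simp only [hφdef, if_pos hOA]
    exact (hpk A hOA).2.2 β hβ s' hs'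
  have hlogN₀_le : Real.logb 2 N₀ ≤ L := by
    rw [hLdef]
    exact Real.logb_le_logb_of_le one_lt_two (by exact_mod_cast hN₀1) (by exact_mod_cast hN₀n)
  have hlogN₀_0 : 0 ≤ Real.logb 2 N₀ :=
    Real.logb_nonneg one_lt_two (by exact_mod_cast hN₀1)
  have hLτ0 : 0 ≤ L / τ := by positivity
  have hLτL : L / τ ≤ L := by
    rw [div_le_iff₀ (by exact_mod_cast hτ)]
    nlinarith [hL0, (by exact_mod_cast hτ : (1:ℝ) ≤ τ)]
  have hφ_le : ∀ A, φ A ≤ L := by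
    intro A
    simp only [hφdef]
    split
    · next h => exact hv_le_L _ (hpk A h).1 _
    · linarith
  have hφ_ge : ∀ A, -L ≤ φ A := by
    intro A
    simp only [hφdef]
    split
    · next h => exact hv_ge _ (hpk A h).1 _
    · linarith
  -- dynamics covered by nextSet
  have hC1 : ∀ A ∈ c.cov, ∀ y ∈ A, F y (c.G A) ⊆ ⋃ B ∈ nextSet A, B := by
    intro A hA y hy
    by_cases h : Occ A
    · obtain ⟨hpk1, hpk2, -⟩ := hpk A h
      by_cases hs : ((pk A).2 : ℕ) + 1 < τ
      · have hstep := hS.2.2 (pk A).1 hpk1 (pk A).2 hs y (by rw [hpk2]; exact hy)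
        rw [hpk2] at hstep
        have : nextSet A = Pset 𝒮 (pk A).1 ((pk A).2 : ℕ) := by
          simp only [hnextdef, if_pos h]
        rw [this]
        exact hstep
      · have h2 : nextSet A = Inits := by
          simp only [hnextdef, if_pos h]
          exact hPset_eq_Inits _ _ hs
        rw [h2]
        exact fun z hz => hQsubInits (c.inv A hA y hy hz)
    · have h2 : nextSet A = Inits := by simp only [hnextdef, if_neg h]
      rw [h2]
      exact fun z hz => hQsubInits (c.inv A hA y hy hz)
  have hC2 : ∀ A ∈ c.cov, ∀ x ∈ closure A, F x (c.G A) ⊆ ⋃ B ∈ nextSet A, closure B := by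
    intro A hA x hx
    refine (lsc_closure F hlsc (hC1 A hA) x hx).trans (closure_minimal ?_ ?_)
    · exact Set.iUnion₂_mono fun B _ => subset_closure
    · exact (hnext_fin A).isClosed_biUnion (fun B _ => isClosed_closure)
  -- Bellman inequality
  have hKEY0 : ∀ A, ∀ B ∈ nextSet A,
      Real.logb 2 ((nextSet A).ncard : ℝ) + φ B ≤ φ A + L / τ := by
    intro A B hB
    have hvB0 : ∀ β ∈ 𝒮, (h0 : 0 < τ) → B = β ⟨0, h0⟩ → φ B ≤ 0 := by
      intro β hβ h0 hBeq
      have h1 : φ B ≤ v β 0 := hφ_le_v B β hβ ⟨0, h0⟩ hBeq.symm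
      have h2 : v β 0 ≤ 0 := by
        simp only [hvdef]
        have h3 : Real.logb 2 (W β 0) ≤ L := by
          rw [hLdef]
          exact Real.logb_le_logb_of_le one_lt_two
            (by exact_mod_cast hW_ge1 β hβ 0) (by exact_mod_cast hW_le β hβ 0)
        have h4 : ((τ - 0 : ℕ) : ℝ) / τ = 1 := by
          rw [Nat.sub_zero, div_self (Nat.cast_ne_zero.mpr (by omega) : (τ:ℝ) ≠ 0)]
        rw [h4]
        linarith
      linarith
    by_cases h : Occ A
    · obtain ⟨hpk1, hpk2, -⟩ := hpk A h
      have hφA : φ A = v (pk A).1 ((pk A).2 : ℕ) := by simp only [hφdef, if_pos h]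
      by_cases hs : ((pk A).2 : ℕ) + 1 < τ
      · set α := (pk A).1 with hα
        set s : ℕ := ((pk A).2 : ℕ) with hs0
        have hBP : B ∈ Pset 𝒮 α s := by
          have : nextSet A = Pset 𝒮 α s := by simp only [hnextdef, if_pos h]; rfl
          rwa [this] at hB
        have hnc : (nextSet A).ncard = (Pset 𝒮 α s).ncard := by
          have : nextSet A = Pset 𝒮 α s := by simp only [hnextdef, if_pos h]; rfl
          rw [this]
        rw [Pset, dif_pos hs] at hBP
        obtain ⟨β, hβ, hagr, hBeq⟩ := hBP
        have hφB : φ B ≤ v β (s + 1) := hφ_le_v B β hβ ⟨s + 1, hs⟩ hBeq.symm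
        have hf1 : 1 ≤ (Pset 𝒮 α s).ncard := hPcard_pos α hpk1 s
        have hWb1 : 1 ≤ W β (s + 1) := hW_ge1 β hβ (s + 1)
        have hWa1 : 1 ≤ W α s := hW_ge1 α hpk1 s
        have hK := hK4 α hpk1 s hs β hβ hagr
        have hlog : Real.logb 2 ((Pset 𝒮 α s).ncard : ℝ) + Real.logb 2 (W β (s + 1)) ≤
            Real.logb 2 (W α s) := by
          rw [← Real.logb_mul (Nat.cast_ne_zero.mpr (by omega))
            (Nat.cast_ne_zero.mpr (by omega))]
          refine Real.logb_le_logb_of_le one_lt_two ?_ ?_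
          · have : (0:ℕ) < (Pset 𝒮 α s).ncard * W β (s + 1) := Nat.mul_pos (by omega) (by omega)
            exact_mod_cast this
          · exact_mod_cast hK
        have hc : ((τ - s : ℕ) : ℝ) = ((τ - (s + 1) : ℕ) : ℝ) + 1 := by
          have hnat : τ - s = (τ - (s + 1)) + 1 := by omega
          rw [hnat]
          push_cast
          ring
        have hsplit : ((τ - s : ℕ) : ℝ) / τ * L = ((τ - (s + 1) : ℕ) : ℝ) / τ * L + L / τ := by
          rw [hc]
          field_simp
        rw [hnc, hφA]
        simp only [hvdef] at hφB ⊢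
        linarith
      · -- junction case : s + 1 = τ
        have hnA : nextSet A = Inits := by
          simp only [hnextdef, if_pos h]
          exact hPset_eq_Inits _ _ hs
        have hsv : ((pk A).2 : ℕ) = τ - 1 := by have := (pk A).2.2; omega
        have hWlast : W (pk A).1 ((pk A).2 : ℕ) = N₀ := by rw [hsv]; exact hW_last _ hpk1
        have hφA' : φ A = Real.logb 2 N₀ - L / τ := by
          rw [hφA]
          simp only [hvdef]
          rw [hWlast, hsv]
          have h1 : ((τ - (τ - 1) : ℕ) : ℝ) = 1 := by
            have h2 : τ - (τ - 1) = 1 := by omega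
            rw [h2]; norm_num
          rw [h1]
          ring
        rw [hnA] at hB
        obtain ⟨β, hβ, h0, hBeq⟩ := hB
        have hφB : φ B ≤ 0 := hvB0 β hβ h0 hBeq
        rw [hnA, hφA']
        linarith
    · have hnA : nextSet A = Inits := by simp only [hnextdef, if_neg h]
      have hφA' : φ A = Real.logb 2 N₀ - L / τ := by simp only [hφdef, if_neg h]
      rw [hnA] at hB ⊢
      obtain ⟨β, hβ, h0, hBeq⟩ := hB
      have hφB : φ B ≤ 0 := hvB0 β hβ h0 hBeq
      rw [hφA']
      linarith
  -- choice of representatives minimizing φ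
  have hrex : ∀ C : Set X, ∃ A : Set X, C ∈ closure '' c.cov →
      ((A ∈ c.cov ∧ closure A = C) ∧ ∀ B ∈ c.cov, closure B = C → φ A ≤ φ B) := by
    intro C
    by_cases hC : C ∈ closure '' c.cov
    · have hfin : {A | A ∈ c.cov ∧ closure A = C}.Finite := c.finite.subset (fun A hA => hA.1)
      have hne : {A | A ∈ c.cov ∧ closure A = C}.Nonempty := by
        obtain ⟨A, hA, rfl⟩ := hC
        exact ⟨A, hA, rfl⟩
      obtain ⟨A, hA, hmin⟩ := Set.exists_min_image _ φ hfin hne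
      exact ⟨A, fun _ => ⟨hA, fun B hB hBC => hmin B ⟨hB, hBC⟩⟩⟩
    · exact ⟨∅, fun hc => absurd hc hC⟩
  choose ρ0 hρ0 using hrex
  set ρ : Set X → Set X := fun C => if C ∈ closure '' c.cov then ρ0 C else ∅ with hρdef
  have hρA : ∀ C ∈ closure '' c.cov, ρ C ∈ c.cov ∧ closure (ρ C) = C := by
    intro C hC
    simp only [hρdef, if_pos hC]
    exact (hρ0 C hC).1
  have hρmin : ∀ C ∈ closure '' c.cov, ∀ B ∈ c.cov, closure B = C → φ (ρ C) ≤ φ B := by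
    intro C hC
    simp only [hρdef, if_pos hC]
    exact (hρ0 C hC).2
  have hρmem : ρ ∈ repSet c := ⟨hρA, fun C hC => by simp only [hρdef, if_neg hC]⟩
  refine ⟨ρ, hρmem, ?_⟩
  set c' := mkClosureCover F Q hQclosed hlsc c ρ hρmem.1 with hc'def
  -- successor map on closures
  set succ : Set X → Set (Set X) := fun C => closure '' nextSet (ρ C) with hsuccdef
  have hsucc_ne : ∀ C, (succ C).Nonempty := fun C => (hnext_ne (ρ C)).image _
  have hsucc_sub : ∀ C, succ C ⊆ closure '' c.cov :=
    fun C => Set.image_mono (hnext_sub (ρ C))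
  have hsucc_fin : ∀ C, (succ C).Finite := fun C => (hnext_fin (ρ C)).image _
  have hsucc_card : ∀ C, (succ C).ncard ≤ (nextSet (ρ C)).ncard :=
    fun C => Set.ncard_image_le (hnext_fin (ρ C))
  have hsucc_card1 : ∀ C, 1 ≤ (succ C).ncard :=
    fun C => (Set.ncard_pos (hsucc_fin C)).mpr (hsucc_ne C)
  -- canonical forward chains
  set nxt : Set X → Set X := fun C => (hsucc_ne C).some with hnxtdef
  have hnxt_mem : ∀ C, nxt C ∈ succ C := fun C => (hsucc_ne C).some_mem
  set chain : Set X → ℕ → Set X := fun C m => nxt^[m] C with hchaindef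
  have hchain0 : ∀ C, chain C 0 = C := fun C => rfl
  have hchainS : ∀ C m, chain C (m + 1) = nxt (chain C m) := by
    intro C m
    simp only [hchaindef]
    rw [Function.iterate_succ_apply']
  have hchain_mem : ∀ C m, chain C (m + 1) ∈ succ (chain C m) := by
    intro C m
    rw [hchainS]
    exact hnxt_mem _
  -- final Bellman inequality
  have hKEY : ∀ C ∈ closure '' c.cov, ∀ D ∈ succ C,
      Real.logb 2 ((succ C).ncard : ℝ) + φ (ρ D) ≤ φ (ρ C) + L / τ := by
    intro C hC D hD
    obtain ⟨B, hB, rfl⟩ := hD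
    have h1 := hKEY0 (ρ C) B hB
    have h2 : φ (ρ (closure B)) ≤ φ B :=
      hρmin (closure B) ⟨B, hnext_sub _ hB, rfl⟩ B (hnext_sub _ hB) rfl
    have h3 : Real.logb 2 ((succ C).ncard : ℝ) ≤ Real.logb 2 ((nextSet (ρ C)).ncard : ℝ) :=
      Real.logb_le_logb_of_le one_lt_two (by exact_mod_cast hsucc_card1 C)
        (by exact_mod_cast hsucc_card C)
    linarith
  -- the spanning sets for the closure cover
  have hmain : ∀ k : ℕ, 1 ≤ k → rinv F Q c' (k * τ) ≤ ((n ^ (k + 3) : ℕ) : ℕ∞) := by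
    intro k hk
    set τ' := k * τ with hτ'def
    have hτ' : 0 < τ' := Nat.mul_pos (by omega) hτ
    set CI : Set (Set X) := closure '' Inits with hCIdef
    have hCI_sub : CI ⊆ closure '' c.cov := Set.image_mono hInits_sub
    have hCI_ne : CI.Nonempty := hInits_ne.image _
    have hCI_fin : CI.Finite := hInits_fin.image _
    have hCI_card : CI.ncard ≤ N₀ := Set.ncard_image_le hInits_fin
    have hCI_card1 : 1 ≤ CI.ncard := (Set.ncard_pos hCI_fin).mpr hCI_ne
    set 𝒮' : Set (Fin τ' → Set X) := {γ | γ ⟨0, hτ'⟩ ∈ CI ∧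
      ∀ (t : ℕ) (h1 : t + 1 < τ'), γ ⟨t + 1, h1⟩ ∈ succ (γ ⟨t, by omega⟩)} with h𝒮'def
    have hchain_in : ∀ I ∈ CI, (fun i : Fin τ' => chain I (i : ℕ)) ∈ 𝒮' := by
      intro I hI
      constructor
      · simpa [hchain0] using hI
      · intro t h1
        simpa using hchain_mem I t
    have h𝒮'_ne : 𝒮'.Nonempty := ⟨_, hchain_in _ hCI_ne.some_mem⟩
    have hvals : ∀ γ ∈ 𝒮', ∀ m : ℕ, ∀ hm : m < τ', γ ⟨m, hm⟩ ∈ closure '' c.cov := by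
      intro γ hγ m
      induction m with
      | zero => exact fun hm => hCI_sub hγ.1
      | succ m ih =>
        intro hm
        exact hsucc_sub _ (hγ.2 m hm)
    have hext : ∀ γ ∈ 𝒮', ∀ t : ℕ, ∀ h1 : t + 1 < τ', ∀ D ∈ succ (γ ⟨t, by omega⟩),
        ∃ β ∈ 𝒮', (∀ t' : Fin τ', (t' : ℕ) ≤ t → β t' = γ t') ∧ β ⟨t + 1, h1⟩ = D := by
      intro γ hγ t h1 D hD
      refine ⟨fun i : Fin τ' =>
        if h : (i : ℕ) ≤ t then γ i else chain D ((i : ℕ) - (t + 1)), ⟨?_, ?_⟩, ?_, ?_⟩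
      · simp only [Fin.val_mk, dif_pos (Nat.zero_le t)]
        exact hγ.1
      · intro m hm1
        by_cases hmt : m + 1 ≤ t
        · simp only [Fin.val_mk, dif_pos hmt, dif_pos (by omega : m ≤ t)]
          exact hγ.2 m hm1
        · by_cases hmt2 : m + 1 = t + 1
          · have hmeq : m = t := by omega
            subst hmeq
            simp only [Fin.val_mk, dif_neg (by omega : ¬ m + 1 ≤ m), dif_pos (le_refl m)]
            simpa [Nat.sub_self, hchain0] using hD
          · simp only [Fin.val_mk, dif_neg (by omega : ¬ m + 1 ≤ t), dif_neg (by omega : ¬ m ≤ t)]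
            have h2 : m + 1 - (t + 1) = (m - (t + 1)) + 1 := by omega
            rw [h2]
            exact hchain_mem D (m - (t + 1))
      · intro t' ht'
        simp only [dif_pos ht']
      · simp only [Fin.val_mk, dif_neg (by omega : ¬ t + 1 ≤ t), Nat.sub_self]
        exact hchain0 D
    have hPset'_succ : ∀ γ ∈ 𝒮', ∀ t : ℕ, ∀ h1 : t + 1 < τ',
        Pset 𝒮' γ t = succ (γ ⟨t, by omega⟩) := by
      intro γ hγ t h1
      rw [Pset, dif_pos h1]
      ext D
      constructor
      · rintro ⟨β, hβ, hagr, rfl⟩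
        have hst := hβ.2 t h1
        rwa [hagr ⟨t, by omega⟩ (le_refl t)] at hst
      · intro hD
        obtain ⟨β, hβ, hagr, hβD⟩ := hext γ hγ t h1 D hD
        exact ⟨β, hβ, hagr, hβD.symm⟩
    have hPset'_last : ∀ (γ : Fin τ' → Set X) (t : ℕ), ¬ (t + 1 < τ') →
        Pset 𝒮' γ t = CI := by
      intro γ t ht
      rw [Pset, dif_neg ht]
      ext D
      constructor
      · rintro ⟨β, hβ, h0, rfl⟩
        exact hβ.1
      · intro hD
        exact ⟨_, hchain_in D hD, hτ', (hchain0 D).symm⟩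
    have hspan : IsSpanning F Q c' τ' 𝒮' := by
      refine ⟨?_, ?_, ?_⟩
      · intro γ hγ t
        have h1 := hvals γ hγ (t : ℕ) t.2
        have h2 : (⟨(t : ℕ), t.2⟩ : Fin τ') = t := rfl
        rw [h2] at h1
        exact h1
      · intro x hx
        obtain ⟨β, hβ, h0, hxβ⟩ := hS.2.1 x hx
        refine ⟨_, hchain_in (closure (β ⟨0, h0⟩)) ⟨_, ⟨β, hβ, h0, rfl⟩, rfl⟩, hτ', ?_⟩
        exact subset_closure hxβ
      · intro γ hγ t ht x hxγ
        have hmem : γ t ∈ closure '' c.cov := by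
          have h1 := hvals γ hγ (t : ℕ) t.2
          have h2 : (⟨(t : ℕ), t.2⟩ : Fin τ') = t := rfl
          rwa [h2] at h1
        have hA := hρA _ hmem
        have hsub := hC2 (ρ (γ t)) hA.1 x (by rw [hA.2]; exact hxγ)
        have hgoal : (⋃ B ∈ nextSet (ρ (γ t)), closure B) = ⋃ D ∈ Pset 𝒮' γ (t : ℕ), D := by
          rw [hPset'_succ γ hγ (t : ℕ) ht]
          have h2 : (⟨(t : ℕ), by omega⟩ : Fin τ') = t := rfl
          rw [h2, hsuccdef]
          rw [Set.biUnion_image]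
        rw [← hgoal]
        exact hsub
    -- counting
    have hcount : ∀ γ ∈ 𝒮', ∏ t ∈ Finset.range τ', (Pset 𝒮' γ t).ncard ≤ n ^ (k + 3) := by
      intro γ hγ
      have hcard_pos : ∀ t < τ', 1 ≤ (Pset 𝒮' γ t).ncard := by
        intro t htτ
        by_cases h1 : t + 1 < τ'
        · rw [hPset'_succ γ hγ t h1]
          exact hsucc_card1 _
        · rw [hPset'_last γ t h1]
          exact hCI_card1
      set g : ℕ → ℝ := fun m => if hm : m < τ' then φ (ρ (γ ⟨m, hm⟩)) else 0 with hgdef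
      have hgbound : ∀ m, -L ≤ g m ∧ g m ≤ L := by
        intro m
        simp only [hgdef]
        split
        · exact ⟨hφ_ge _, hφ_le _⟩
        · constructor <;> linarith
      have hstep : ∀ m, ∀ hm : m + 1 < τ',
          Real.logb 2 ((Pset 𝒮' γ m).ncard : ℝ) ≤ g m - g (m + 1) + L / τ := by
        intro m hm
        have hmτ : m < τ' := by omega
        have h1 := hKEY (γ ⟨m, hmτ⟩) (hvals γ hγ m hmτ) (γ ⟨m + 1, hm⟩) (hγ.2 m hm)
        rw [hPset'_succ γ hγ m hm]
        have hg1 : g m = φ (ρ (γ ⟨m, hmτ⟩)) := by simp only [hgdef, dif_pos hmτ]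
        have hg2 : g (m + 1) = φ (ρ (γ ⟨m + 1, hm⟩)) := by simp only [hgdef, dif_pos hm]
        rw [hg1, hg2]
        linarith
      set T := τ' - 1 with hTdef
      have hrange : Finset.range τ' = Finset.range (T + 1) := by
        congr 1
        omega
      have hlast : (Pset 𝒮' γ T).ncard ≤ N₀ := by
        rw [hPset'_last γ T (by omega)]
        exact hCI_card
      have hlast1 : 1 ≤ (Pset 𝒮' γ T).ncard := hcard_pos T (by omega)
      have hsum : ∑ t ∈ Finset.range T, Real.logb 2 ((Pset 𝒮' γ t).ncard : ℝ) ≤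
          g 0 - g T + T * (L / τ) := by
        have h1 : ∀ t ∈ Finset.range T, Real.logb 2 ((Pset 𝒮' γ t).ncard : ℝ) ≤
            (g t - g (t + 1)) + L / τ := by
          intro t htT
          exact hstep t (by have := Finset.mem_range.mp htT; omega)
        calc ∑ t ∈ Finset.range T, Real.logb 2 ((Pset 𝒮' γ t).ncard : ℝ)
            ≤ ∑ t ∈ Finset.range T, ((g t - g (t + 1)) + L / τ) := Finset.sum_le_sum h1
          _ = (∑ t ∈ Finset.range T, (g t - g (t + 1))) + T * (L / τ) := by
              rw [Finset.sum_add_distrib, Finset.sum_const, Finset.card_range]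
              simp [nsmul_eq_mul]
          _ = g 0 - g T + T * (L / τ) := by rw [Finset.sum_range_sub' g T]
      have hTL : (T : ℝ) * (L / τ) ≤ k * L := by
        have h1 : (T : ℝ) ≤ (τ' : ℝ) := by exact_mod_cast Nat.le_of_lt (by omega)
        have h2 : (τ' : ℝ) * (L / τ) = k * L := by
          have hcast : (τ' : ℝ) = (k : ℝ) * (τ : ℝ) := by
            rw [hτ'def]
            push_cast
            ring
          rw [hcast]
          field_simp
        have h3 : 0 ≤ L / τ := hLτ0
        nlinarith
      have hloglast : Real.logb 2 ((Pset 𝒮' γ T).ncard : ℝ) ≤ L := by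
        have hc1 : (1:ℝ) ≤ ((Pset 𝒮' γ T).ncard : ℝ) := by exact_mod_cast hlast1
        have hc2 : ((Pset 𝒮' γ T).ncard : ℝ) ≤ (N₀ : ℝ) := by exact_mod_cast hlast
        refine le_trans (Real.logb_le_logb_of_le one_lt_two (by linarith) hc2) hlogN₀_le
      have hlogprod : Real.logb 2 ((∏ t ∈ Finset.range τ', (Pset 𝒮' γ t).ncard : ℕ) : ℝ) ≤
          ((k : ℝ) + 3) * L := by
        have hne0 : ∀ t ∈ Finset.range τ', (((Pset 𝒮' γ t).ncard : ℕ) : ℝ) ≠ 0 := by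
          intro t htτ
          have h1 := hcard_pos t (Finset.mem_range.mp htτ)
          exact Nat.cast_ne_zero.mpr (by omega)
        rw [Nat.cast_prod, Real.logb_prod _ _ hne0]
        rw [hrange, Finset.sum_range_succ]
        have hg0 := hgbound 0
        have hgT := hgbound T
        calc (∑ t ∈ Finset.range T, Real.logb 2 ((Pset 𝒮' γ t).ncard : ℝ)) +
              Real.logb 2 ((Pset 𝒮' γ T).ncard : ℝ)
            ≤ (g 0 - g T + T * (L / τ)) + L := by linarith
          _ ≤ (L + L + (k : ℝ) * L) + L := by linarith
          _ = ((k : ℝ) + 3) * L := by ring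
      by_contra hlt
      push_neg at hlt
      have hpowpos : (0 : ℝ) < ((n ^ (k + 3) : ℕ) : ℝ) := by
        have : 0 < n ^ (k + 3) := Nat.pow_pos (by omega)
        exact_mod_cast this
      have h5 : Real.logb 2 ((n ^ (k + 3) : ℕ) : ℝ) <
          Real.logb 2 ((∏ t ∈ Finset.range τ', (Pset 𝒮' γ t).ncard : ℕ) : ℝ) :=
        Real.logb_lt_logb one_lt_two hpowpos (by exact_mod_cast hlt)
      have h6 : Real.logb 2 ((n ^ (k + 3) : ℕ) : ℝ) = ((k : ℝ) + 3) * L := by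
        push_cast
        rw [Real.logb_pow]
        push_cast
        ring
      linarith
    have hexp : expNum 𝒮' ≤ n ^ (k + 3) := by
      apply csSup_le
      · obtain ⟨γ, hγ⟩ := h𝒮'_ne
        exact ⟨_, γ, hγ, rfl⟩
      · rintro m ⟨γ, hγ, rfl⟩
        exact hcount γ hγ
    calc rinv F Q c' τ' ≤ ((expNum 𝒮' : ℕ) : ℕ∞) := sInf_le ⟨𝒮', hspan, rfl⟩
      _ ≤ ((n ^ (k + 3) : ℕ) : ℕ∞) := by exact_mod_cast hexp
  -- entropy bound for the closure cover
  have hterm : ∀ k : ℕ, 1 ≤ k →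
      coverEntropy F Q c' ≤ (((((k * τ : ℕ) : ℝ))⁻¹ * (((k : ℝ) + 3) * L) : ℝ) : EReal) := by
    intro k hk
    have h1 : coverEntropy F Q c' ≤
        (((((k * τ : ℕ) : ℝ))⁻¹ : ℝ) : EReal) * elog2 (rinv F Q c' (k * τ)) := by
      exact iInf_le_of_le (k * τ) (iInf_le_of_le (Nat.mul_pos (by omega) hτ) le_rfl)
    have h2 := hmain k hk
    have h2' : rinv F Q c' (k * τ) ≠ ⊤ :=
      ne_top_of_le_ne_top (WithTop.coe_ne_top) h2
    obtain ⟨m, hm⟩ := WithTop.ne_top_iff_exists.mp h2'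
    have hmn : m ≤ n ^ (k + 3) := by
      rw [← hm] at h2
      exact WithTop.coe_le_coe.mp h2
    have h3 : elog2 (rinv F Q c' (k * τ)) = ((Real.logb 2 m : ℝ) : EReal) := by
      rw [← hm]
      rfl
    have h4 : Real.logb 2 (m : ℝ) ≤ ((k : ℝ) + 3) * L := by
      have h6 : Real.logb 2 ((n ^ (k + 3) : ℕ) : ℝ) = ((k : ℝ) + 3) * L := by
        push_cast
        rw [Real.logb_pow]
        push_cast
        ring
      rcases Nat.eq_zero_or_pos m with hm0 | hm0
      · subst hm0
        simp only [Nat.cast_zero, Real.logb_zero]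
        positivity
      · rw [← h6]
        exact Real.logb_le_logb_of_le one_lt_two (by exact_mod_cast hm0) (by exact_mod_cast hmn)
    calc coverEntropy F Q c'
        ≤ (((((k * τ : ℕ) : ℝ))⁻¹ : ℝ) : EReal) * elog2 (rinv F Q c' (k * τ)) := h1
      _ = (((((k * τ : ℕ) : ℝ))⁻¹ * Real.logb 2 (m : ℝ) : ℝ) : EReal) := by
          rw [h3, ← EReal.coe_mul]
      _ ≤ _ := by
          apply EReal.coe_le_coe_iff.mpr
          apply mul_le_mul_of_nonneg_left h4
          positivity
  -- pass to the limit
  by_contra hlt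
  push_neg at hlt
  obtain ⟨x, hx1, hx2⟩ := EReal.lt_iff_exists_real_btwn.mp hlt
  have hTx : (τ : ℝ)⁻¹ * L < x := by exact_mod_cast hx1
  set ε := x - (τ : ℝ)⁻¹ * L with hεdef
  have hε0 : 0 < ε := by simp only [hεdef]; linarith
  have hτR : (0 : ℝ) < (τ : ℝ) := by exact_mod_cast hτ
  obtain ⟨k, hk1, hk2⟩ : ∃ k : ℕ, 1 ≤ k ∧
      (((k * τ : ℕ) : ℝ))⁻¹ * (((k : ℝ) + 3) * L) ≤ (τ : ℝ)⁻¹ * L + ε := by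
    refine ⟨max 1 ⌈3 * L / (τ * ε)⌉₊, le_max_left _ _, ?_⟩
    set k := max 1 ⌈3 * L / (τ * ε)⌉₊ with hkdef
    have hk0 : (0 : ℝ) < (k : ℝ) := by
      have : 1 ≤ k := le_max_left _ _
      exact_mod_cast this
    have hkge : 3 * L / (τ * ε) ≤ (k : ℝ) := by
      refine le_trans (Nat.le_ceil _) ?_
      exact_mod_cast le_max_right 1 ⌈3 * L / (τ * ε)⌉₊
    have hid : (((k * τ : ℕ) : ℝ))⁻¹ * (((k : ℝ) + 3) * L) =
        (τ : ℝ)⁻¹ * L + 3 * L / ((k : ℝ) * τ) := by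
      push_cast
      field_simp
    have hbound : 3 * L / ((k : ℝ) * τ) ≤ ε := by
      rw [div_le_iff₀ (by positivity)]
      have h7 := (div_le_iff₀ (by positivity : (0:ℝ) < τ * ε)).mp hkge
      nlinarith
    rw [hid]
    linarith
  have hc := hterm k hk1
  have hcontr : coverEntropy F Q c' ≤ (x : EReal) := by
    refine le_trans hc ?_
    apply EReal.coe_le_coe_iff.mpr
    simp only [hεdef] at hk2
    linarith
  exact absurd (lt_of_le_of_lt hcontr hx2) (lt_irrefl _)

set_option maxHeartbeats 1000000 in
/-- For a topological system with lower semicontinuous `F(·,u)` and closed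
`Q`, replacing the elements of an invariant cover `(𝒜,G)` by their closures yields an
invariant cover `(𝒞,H)` (with `H(cl A) = G(A)` for suitable representatives) whose
entropy satisfies `h(𝒞,H) ≤ h(𝒜,G)`. -/
theorem closure_invCover
    {X U : Type*} [TopologicalSpace X] [Nonempty X] [Nonempty U]
    (F : X → U → Set X) (hF : ∀ x u, (F x u).Nonempty)
    (Q : Set X) (hQ : Q.Nonempty) (hQclosed : IsClosed Q)
    (hlsc : ∀ (u : U) (V : Set X), IsOpen V → IsOpen {x : X | (F x u ∩ V).Nonempty})
    (c : InvCover F Q) :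
    ∃ c' : InvCover F Q,
      c'.cov = closure '' c.cov ∧
      (∀ C ∈ c'.cov, ∃ A ∈ c.cov, C = closure A ∧ c'.G C = c.G A) ∧
      coverEntropy F Q c' ≤ coverEntropy F Q c := by
  classical
  -- the set of representative maps is finite and nonempty
  have hrepne : (repSet c).Nonempty := by
    have hex : ∀ C : Set X, ∃ A : Set X, C ∈ closure '' c.cov →
        (A ∈ c.cov ∧ closure A = C) := by
      intro C
      by_cases hC : C ∈ closure '' c.cov
      · obtain ⟨A, hA, rfl⟩ := hC
        exact ⟨A, fun _ => ⟨hA, rfl⟩⟩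
      · exact ⟨∅, fun h => absurd h hC⟩
    choose ρ0 hρ0 using hex
    refine ⟨fun C => if C ∈ closure '' c.cov then ρ0 C else ∅, ?_, ?_⟩
    · intro C hC
      simp only [if_pos hC]
      exact hρ0 C hC
    · intro C hC
      simp only [if_neg hC]
  have hrepfin : (repSet c).Finite := by
    haveI : Finite ↥c.cov := c.finite.to_subtype
    haveI : Finite ↥(closure '' c.cov) := (c.finite.image _).to_subtype
    rw [← Set.finite_coe_iff]
    apply Finite.of_injective (fun ρ : ↥(repSet c) =>
      (fun C : ↥(closure '' c.cov) => (⟨ρ.1 C.1, ((ρ.2).1 C.1 C.2).1⟩ : ↥c.cov)))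
    intro ρ1 ρ2 h
    apply Subtype.ext
    funext C
    by_cases hC : C ∈ closure '' c.cov
    · have h2 := congrFun h ⟨C, hC⟩
      exact Subtype.ext_iff.mp h2
    · rw [(ρ1.2).2 C hC, (ρ2.2).2 C hC]
  -- minimize the entropy over representative maps
  obtain ⟨ρs, hρsmem, hρsmin⟩ := Set.exists_min_image (repSet c)
    (fun ρ => if h : ρ ∈ repSet c then
      coverEntropy F Q (mkClosureCover F Q hQclosed hlsc c ρ h.1) else 0)
    hrepfin hrepne
  refine ⟨mkClosureCover F Q hQclosed hlsc c ρs hρsmem.1, rfl, ?_, ?_⟩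
  · intro C hC
    exact ⟨ρs C, (hρsmem.1 C hC).1, ((hρsmem.1 C hC).2).symm, rfl⟩
  · rw [coverEntropy]
    apply le_iInf
    intro τ
    apply le_iInf
    intro hτ
    by_cases hne : {n : ℕ∞ | ∃ 𝒮 : Set (Fin τ → Set X),
        IsSpanning F Q c τ 𝒮 ∧ n = (expNum 𝒮 : ℕ∞)}.Nonempty
    · have hmem := ENat.sInf_mem' hne
      obtain ⟨𝒮, hS, hval⟩ := hmem
      obtain ⟨ρk, hρk, hkey⟩ := key F Q hQ hQclosed hlsc c τ hτ 𝒮 hS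
      have h1 : coverEntropy F Q (mkClosureCover F Q hQclosed hlsc c ρs hρsmem.1) ≤
          coverEntropy F Q (mkClosureCover F Q hQclosed hlsc c ρk hρk.1) := by
        have h2 := hρsmin ρk hρk
        rw [dif_pos hρk, dif_pos hρsmem] at h2
        exact h2
      refine le_trans (le_trans h1 hkey) ?_
      have h3 : rinv F Q c τ = ((expNum 𝒮 : ℕ) : ℕ∞) := by
        rw [rinv, ← hval]
      rw [h3]
      have h4 : elog2 ((expNum 𝒮 : ℕ) : ℕ∞) = ((Real.logb 2 (expNum 𝒮) : ℝ) : EReal) := rfl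
      rw [h4, ← EReal.coe_mul]
    · have h5 : rinv F Q c τ = ⊤ := by
        rw [rinv, Set.not_nonempty_iff_eq_empty.mp hne, sInf_empty]
      rw [h5]
      have h6 : elog2 ⊤ = ⊤ := rfl
      rw [h6, EReal.coe_mul_top_of_pos]
      · exact le_top
      · have : (0:ℝ) < (τ : ℝ) := by exact_mod_cast hτ
        positivity
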